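/- Suppose n is odd, d = 2e with 2 ≤ d ≤ n-1, and gcd(s,n) = 1. The Delsarte–Goethals alternating code A_{n,d,s} = { Σ_{i=e}^{(n-1)/2} ( b_i x^{q^{si}} − (b_i x)^{q^{s(n-i)}} ) : b_e, ..., b_{(n-1)/2} ∈ F_{q^n} } equals the intersection of G' with A_n(q), where G' = G_{n,n-d+1,s} ∘ x^{q^{sd/2}}, and A_n(q) = { Σ_{i=1}^{n-1} c_i x^{q^i} : c_{n-i} = −c_i^{q^{n-i}} } is the space of alternating linearized polynomials. -/

import Mathlib

lemma DG_frobm {F : Type} [Field F] [Fintype F] {q n : ℕ} (hF : Fintype.card F = q ^ n)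
    (y : F) (a : ℕ) : y ^ q ^ a = y ^ q ^ (a % n) := by
  have h1 : q ^ a = q ^ (a % n) * (q ^ n) ^ (a / n) := by
    rw [← pow_mul, ← pow_add, Nat.mod_add_div]
  rw [h1, pow_mul, ← hF, FiniteField.pow_card_pow]

lemma DG_indep {F : Type} [Field F] [Fintype F] {q n : ℕ} (hq2 : 2 ≤ q)
    (hF : Fintype.card F = q ^ n) (c : ℕ → F)
    (h : ∀ x : F, ∑ m ∈ Finset.range n, c m * x ^ q ^ m = 0) :
    ∀ m, m < n → c m = 0 := by
  classical
  set P : Polynomial F := ∑ m ∈ Finset.range n, Polynomial.C (c m) * Polynomial.X ^ q ^ m with hPdef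
  have heval : ∀ x : F, P.eval x = 0 := by
    intro x
    simpa [P, Polynomial.eval_finset_sum] using h x
  have hdeg : P.natDegree < Fintype.card F := by
    rw [hF]
    have hb : ∀ m ∈ Finset.range n,
        (Polynomial.C (c m) * Polynomial.X ^ q ^ m).natDegree ≤ q ^ n - 1 := by
      intro m hm
      refine le_trans (Polynomial.natDegree_C_mul_le _ _) ?_
      rw [Polynomial.natDegree_X_pow]
      have : q ^ m < q ^ n := Nat.pow_lt_pow_right hq2 (Finset.mem_range.mp hm)
      omega
    have h2 : P.natDegree ≤ q ^ n - 1 := by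
      rw [hPdef]; exact Polynomial.natDegree_sum_le_of_forall_le (Finset.range n) _ hb
    have hq0 : 0 < q ^ n := pow_pos (by omega) n
    omega
  have hP0 : P = 0 :=
    Polynomial.eq_zero_of_natDegree_lt_card_of_eval_eq_zero P Function.injective_id
      (fun i => heval i) hdeg
  intro m hm
  have hco := congrArg (fun p => Polynomial.coeff p (q ^ m)) hP0
  simp only [Polynomial.finset_sum_coeff, Polynomial.coeff_C_mul, Polynomial.coeff_X_pow,
    Polynomial.coeff_zero, hPdef] at hco
  rw [Finset.sum_eq_single m] at hco
  · simpa using hco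
  · intro b hb hbm
    have hne : ¬ (q ^ m = q ^ b) := fun hh => hbm (Nat.pow_right_injective hq2 hh).symm
    simp [hne]
  · intro hm'
    exact absurd (Finset.mem_range.mpr hm) hm'

/-- The Delsarte–Goethals alternating code `A_{n,d,s}` (with `n` odd, `d = 2e`)
equals `G' ∩ A_n(q)`, where `G' = G_{n,n-d+1,s} ∘ x^(q^(sd/2))` and `A_n(q)` is the
space of alternating linearized polynomials (all viewed as functions on `F_{qⁿ}`). -/
theorem stmt_14 (q n d e s : ℕ) (hq : IsPrimePow q) (hodd : Odd n)
    (hde : d = 2 * e) (hd2 : 2 ≤ d) (hdn : d ≤ n - 1) (hs : Nat.gcd s n = 1)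
    (F : Type) [Field F] [Fintype F] (hF : Fintype.card F = q ^ n) :
    {f : F → F | ∃ b : ℕ → F, ∀ x : F,
        f x = ∑ i ∈ Finset.Icc e ((n - 1) / 2),
          (b i * x ^ q ^ (s * i) - (b i * x) ^ q ^ (s * (n - i)))}
    = {f : F → F | ∃ a : ℕ → F, ∀ x : F,
          f x = ∑ i ∈ Finset.range (n - d + 1), a i * x ^ q ^ (s * (i + d / 2))}
      ∩ {f : F → F | ∃ c : ℕ → F, c 0 = 0 ∧
          (∀ i, 1 ≤ i → i < n → c (n - i) = -(c i ^ q ^ (n - i))) ∧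
          ∀ x : F, f x = ∑ i ∈ Finset.range n, c i * x ^ q ^ i} := by
  classical
  subst hde
  obtain ⟨p, v, hpp, hv, hpv⟩ := hq
  have hp' : p.Prime := hpp.nat_prime
  have hq2 : 2 ≤ q := by
    calc 2 ≤ p := hp'.two_le
      _ ≤ p ^ v := Nat.le_self_pow (by omega) p
      _ = q := hpv
  have he1 : 1 ≤ e := by omega
  have hn3 : 3 ≤ n := by omega
  have hn0 : 0 < n := by omega
  set k := (n - 1) / 2 with hk
  have hnk : n = 2 * k + 1 := by
    obtain ⟨m, hm⟩ := hodd; omega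
  have hek : e ≤ k := by omega
  have h2e : 2 * e / 2 = e := by omega
  -- characteristic
  haveI hrc : CharP F (ringChar F) := ringChar.charP F
  obtain ⟨m, hpr, hcard⟩ := FiniteField.card F (ringChar F)
  have hrp : ringChar F = p := by
    have h1 : ringChar F ∣ p ^ (v * n) := by
      have hdd : ringChar F ∣ (ringChar F) ^ (m : ℕ) := dvd_pow_self _ m.ne_zero
      rw [← hcard, hF, ← hpv, ← pow_mul] at hdd
      exact hdd
    exact (Nat.prime_dvd_prime_iff_eq hpr hp').mp (hpr.dvd_of_dvd_pow h1)
  haveI hcp : CharP F p := hrp ▸ hrc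
  haveI : Fact p.Prime := ⟨hp'⟩
  haveI hec : ExpChar F p := ExpChar.prime hp'
  have hqt0 : ∀ t : ℕ, q ^ t ≠ 0 := fun t => pow_ne_zero t (by omega)
  -- power distributes over sums / negation
  have hFsum : ∀ (S : Finset ℕ) (g : ℕ → F) (t : ℕ),
      (∑ j ∈ S, g j) ^ q ^ t = ∑ j ∈ S, g j ^ q ^ t := by
    intro S g t
    rw [← hpv, ← pow_mul]
    exact sum_pow_char_pow (p := p) (n := v * t) S g
  have hFneg : ∀ (y : F) (t : ℕ), (-y) ^ q ^ t = -(y ^ q ^ t) := by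
    intro y t
    rw [← hpv, ← pow_mul]
    have h := sub_pow_char_pow (R := F) (p := p) (n := v * t) (x := (0 : F)) (y := y)
    have hpt : p ^ (v * t) ≠ 0 := pow_ne_zero _ (by have := hp'.two_le; omega)
    simpa [zero_pow hpt] using h
  -- residues
  have hrlt : ∀ j : ℕ, (s * j) % n < n := fun j => Nat.mod_lt _ hn0
  have hr0 : ∀ j, 1 ≤ j → j < n → 1 ≤ (s * j) % n := by
    intro j h1 h2
    rcases Nat.eq_zero_or_pos ((s * j) % n) with h0 | h0
    · exfalso
      have hdvd : n ∣ s * j := Nat.dvd_of_mod_eq_zero h0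
      have hj : n ∣ j := (Nat.Coprime.symm hs).dvd_of_dvd_mul_left hdvd
      have := Nat.le_of_dvd (by omega) hj
      omega
    · exact h0
  have hrpair : ∀ j, 1 ≤ j → j < n → (s * (n - j)) % n = n - (s * j) % n := by
    intro j h1 h2
    have hmod : ((s * j) % n + (s * (n - j)) % n) % n = 0 := by
      rw [← Nat.add_mod]
      have hsn : s * j + s * (n - j) = s * n := by
        rw [← Nat.mul_add]
        congr 1
        omega
      rw [hsn]
      simp [Nat.mul_mod_right]
    have hdvd : n ∣ (s * j) % n + (s * (n - j)) % n := Nat.dvd_of_mod_eq_zero hmod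
    have hb1 : 1 ≤ (s * j) % n := hr0 j h1 h2
    have hb2 : 1 ≤ (s * (n - j)) % n := hr0 (n - j) (by omega) (by omega)
    have hlt1 : (s * j) % n < n := hrlt j
    have hlt2 : (s * (n - j)) % n < n := hrlt (n - j)
    have heqn : (s * j) % n + (s * (n - j)) % n = n :=
      Nat.eq_of_dvd_of_lt_two_mul (by omega) hdvd (by omega)
    omega
  have hrinj : ∀ j j', j < n → j' < n → (s * j) % n = (s * j') % n → j = j' := by
    intro j j' hj hj' hmm
    have h1 : s * j ≡ s * j' [MOD n] := hmm
    have h2 : j ≡ j' [MOD n] :=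
      Nat.ModEq.cancel_left_of_coprime (by rwa [Nat.gcd_comm]) h1
    have h3 : j % n = j' % n := h2
    rwa [Nat.mod_eq_of_lt hj, Nat.mod_eq_of_lt hj'] at h3
  -- sum-manipulation helpers
  have hswap : ∀ (T : Finset ℕ) (idx : ℕ → ℕ) (co : ℕ → F) (x : F), (∀ j ∈ T, idx j < n) →
      ∑ m ∈ Finset.range n, (∑ j ∈ T, if idx j = m then co j else 0) * x ^ q ^ m
        = ∑ j ∈ T, co j * x ^ q ^ (idx j) := by
    intro T idx co x hidx
    have h1 : ∀ m, (∑ j ∈ T, if idx j = m then co j else 0) * x ^ q ^ m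
        = ∑ j ∈ T, (if idx j = m then co j * x ^ q ^ m else 0) := by
      intro m
      rw [Finset.sum_mul]
      exact Finset.sum_congr rfl fun j _ => by split <;> simp
    simp_rw [h1]
    rw [Finset.sum_comm]
    refine Finset.sum_congr rfl fun j hj => ?_
    rw [Finset.sum_ite_eq (Finset.range n) (idx j) (fun m => co j * x ^ q ^ m),
      if_pos (Finset.mem_range.mpr (hidx j hj))]
  have hreidx : ∀ g : ℕ → F,
      ∑ i ∈ Finset.range (n - 2 * e + 1), g (i + e) = ∑ j ∈ Finset.Icc e (n - e), g j := by
    intro g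
    refine Finset.sum_nbij' (fun i => i + e) (fun j => j - e) ?_ ?_ ?_ ?_ ?_
    · intro i hi
      simp only [Finset.mem_range] at hi
      simp only [Finset.mem_Icc]
      omega
    · intro j hj
      simp only [Finset.mem_Icc] at hj
      simp only [Finset.mem_range]
      omega
    · intro i _; show i + e - e = i; omega
    · intro j hj
      simp only [Finset.mem_Icc] at hj
      show j - e + e = j
      omega
    · intro i _; rfl
  have hsplit : ∀ g : ℕ → F,
      ∑ j ∈ Finset.Icc e (n - e), g j
        = ∑ j ∈ Finset.Icc e k, g j + ∑ j ∈ Finset.Ioc k (n - e), g j := by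
    intro g
    have hdisj : Disjoint (Finset.Icc e k) (Finset.Ioc k (n - e)) := by
      rw [Finset.disjoint_left]
      intro x hx hx'
      simp only [Finset.mem_Icc] at hx
      simp only [Finset.mem_Ioc] at hx'
      omega
    rw [← Finset.sum_union hdisj]
    apply Finset.sum_congr _ fun _ _ => rfl
    ext x
    simp only [Finset.mem_Icc, Finset.mem_union, Finset.mem_Ioc]
    omega
  have hreflect : ∀ g : ℕ → F,
      ∑ j ∈ Finset.Ioc k (n - e), g j = ∑ j ∈ Finset.Icc e k, g (n - j) := by
    intro g
    refine Finset.sum_nbij' (fun j => n - j) (fun j => n - j) ?_ ?_ ?_ ?_ ?_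
    · intro j hj
      simp only [Finset.mem_Ioc] at hj
      simp only [Finset.mem_Icc]
      omega
    · intro j hj
      simp only [Finset.mem_Icc] at hj
      simp only [Finset.mem_Ioc]
      omega
    · intro j hj
      simp only [Finset.mem_Ioc] at hj
      show n - (n - j) = j
      omega
    · intro j hj
      simp only [Finset.mem_Icc] at hj
      show n - (n - j) = j
      omega
    · intro j hj
      simp only [Finset.mem_Ioc] at hj
      congr 1
      show j = n - (n - j)
      omega
  ext f
  simp only [Set.mem_setOf_eq, Set.mem_inter_iff]
  constructor
  · rintro ⟨b, hb⟩
    constructor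
    · -- membership in G'
      refine ⟨fun i => if i + e ≤ k then b (i + e)
        else -(b (n - (i + e)) ^ q ^ (s * (i + e))), fun x => ?_⟩
      rw [hb x, h2e]
      have hR : ∑ i ∈ Finset.range (n - 2 * e + 1),
          (if i + e ≤ k then b (i + e) else -(b (n - (i + e)) ^ q ^ (s * (i + e))))
            * x ^ q ^ (s * (i + e))
          = ∑ j ∈ Finset.Icc e (n - e),
            (if j ≤ k then b j else -(b (n - j) ^ q ^ (s * j))) * x ^ q ^ (s * j) :=
        hreidx (fun j => (if j ≤ k then b j else -(b (n - j) ^ q ^ (s * j))) * x ^ q ^ (s * j))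
      rw [hR, hsplit, hreflect]
      rw [← Finset.sum_add_distrib]
      refine Finset.sum_congr rfl fun j hj => ?_
      simp only [Finset.mem_Icc] at hj
      rw [if_pos hj.2, if_neg (by omega), show n - (n - j) = j by omega, mul_pow]
      ring
    · -- membership in A_n(q)
      refine ⟨fun mm => ∑ j ∈ Finset.Icc e k,
        ((if (s * j) % n = mm then b j else 0)
          + (if n - (s * j) % n = mm then -(b j ^ q ^ (n - (s * j) % n)) else 0)), ?_, ?_, ?_⟩
      · apply Finset.sum_eq_zero
        intro j hj
        simp only [Finset.mem_Icc] at hj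
        have h1 : 1 ≤ (s * j) % n := hr0 j (by omega) (by omega)
        have h2 : (s * j) % n < n := hrlt j
        rw [if_neg (by omega), if_neg (by omega), add_zero]
      · intro i hi1 hin
        rw [hFsum, ← Finset.sum_neg_distrib]
        refine Finset.sum_congr rfl fun j hj => ?_
        simp only [Finset.mem_Icc] at hj
        have h1 : 1 ≤ (s * j) % n := hr0 j (by omega) (by omega)
        have h2 : (s * j) % n < n := hrlt j
        by_cases hc1 : (s * j) % n = i
        · rw [if_neg (show ¬((s * j) % n = n - i) by omega),
            if_pos (show n - (s * j) % n = n - i by omega), if_pos hc1,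
            if_neg (show ¬(n - (s * j) % n = i) by omega),
            add_zero, zero_add, hc1]
        · by_cases hc2 : n - (s * j) % n = i
          · rw [if_pos (show (s * j) % n = n - i by omega),
              if_neg (show ¬(n - (s * j) % n = n - i) by omega), if_neg hc1, if_pos hc2,
              add_zero, zero_add, hFneg, neg_neg, ← pow_mul, ← pow_add,
              show n - (s * j) % n + (n - i) = n by omega,
              DG_frobm hF (b j) n, Nat.mod_self, pow_zero, pow_one]
          · rw [if_neg (show ¬((s * j) % n = n - i) by omega),
              if_neg (show ¬(n - (s * j) % n = n - i) by omega), if_neg hc1, if_neg hc2,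
              add_zero, zero_pow (hqt0 _), neg_zero]
      · intro x
        rw [hb x]
        have hcm : ∀ mm : ℕ, (∑ j ∈ Finset.Icc e k,
            ((if (s * j) % n = mm then b j else 0)
              + (if n - (s * j) % n = mm then -(b j ^ q ^ (n - (s * j) % n)) else 0)))
              * x ^ q ^ mm
            = (∑ j ∈ Finset.Icc e k, if (s * j) % n = mm then b j else 0) * x ^ q ^ mm
              + (∑ j ∈ Finset.Icc e k,
                  if n - (s * j) % n = mm then -(b j ^ q ^ (n - (s * j) % n)) else 0)
                * x ^ q ^ mm := by
          intro mm
          rw [Finset.sum_add_distrib, add_mul]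
        simp_rw [hcm]
        rw [Finset.sum_add_distrib]
        rw [hswap (Finset.Icc e k) (fun j => (s * j) % n) b x (fun j _ => hrlt j)]
        rw [hswap (Finset.Icc e k) (fun j => n - (s * j) % n)
          (fun j => -(b j ^ q ^ (n - (s * j) % n))) x ?_]
        · rw [← Finset.sum_add_distrib]
          refine Finset.sum_congr rfl fun j hj => ?_
          simp only [Finset.mem_Icc] at hj
          have h1 : 1 ≤ (s * j) % n := hr0 j (by omega) (by omega)
          rw [mul_pow, DG_frobm hF x (s * j), DG_frobm hF x (s * (n - j)),
            DG_frobm hF (b j) (s * (n - j)), hrpair j (by omega) (by omega)]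
          ring
        · intro j hj
          simp only [Finset.mem_Icc] at hj
          have h1 : 1 ≤ (s * j) % n := hr0 j (by omega) (by omega)
          show n - (s * j) % n < n
          omega
  · rintro ⟨⟨a, ha⟩, c, hc0, hcalt, hcs⟩
    simp only [h2e] at ha
    refine ⟨fun j => c ((s * j) % n), fun x => ?_⟩
    have key : ∀ i ∈ Finset.range (n - 2 * e + 1), a i = c ((s * (i + e)) % n) := by
      have hzero : ∀ x : F, ∑ mm ∈ Finset.range n,
          (c mm - ∑ i ∈ Finset.range (n - 2 * e + 1),
            if (s * (i + e)) % n = mm then a i else 0) * x ^ q ^ mm = 0 := by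
        intro x
        have hsub : ∀ mm : ℕ, (c mm - ∑ i ∈ Finset.range (n - 2 * e + 1),
            if (s * (i + e)) % n = mm then a i else 0) * x ^ q ^ mm
            = c mm * x ^ q ^ mm
              - (∑ i ∈ Finset.range (n - 2 * e + 1),
                  if (s * (i + e)) % n = mm then a i else 0) * x ^ q ^ mm := by
          intro mm; rw [sub_mul]
        simp_rw [hsub]
        rw [Finset.sum_sub_distrib, ← hcs x,
          hswap (Finset.range (n - 2 * e + 1)) (fun i => (s * (i + e)) % n) a x
            (fun i _ => hrlt (i + e))]
        have hfr : ∀ i ∈ Finset.range (n - 2 * e + 1),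
            a i * x ^ q ^ ((s * (i + e)) % n) = a i * x ^ q ^ (s * (i + e)) := by
          intro i _
          rw [DG_frobm hF x (s * (i + e))]
        rw [Finset.sum_congr rfl hfr, ← ha x, sub_self]
      have hcc' := DG_indep hq2 hF _ hzero
      intro i hi
      simp only [Finset.mem_range] at hi
      have hlt : (s * (i + e)) % n < n := hrlt (i + e)
      have h0 := hcc' _ hlt
      have h1 : c ((s * (i + e)) % n) = ∑ i' ∈ Finset.range (n - 2 * e + 1),
          if (s * (i' + e)) % n = (s * (i + e)) % n then a i' else 0 := by
        exact sub_eq_zero.mp h0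
      rw [h1, Finset.sum_eq_single i]
      · rw [if_pos rfl]
      · intro i' hi' hne
        rw [if_neg]
        intro heq
        have : i' + e = i + e :=
          hrinj _ _ (by simp only [Finset.mem_range] at hi'; omega) (by omega) heq
        omega
      · intro hh
        exact absurd (Finset.mem_range.mpr hi) hh
    calc f x = ∑ i ∈ Finset.range (n - 2 * e + 1), a i * x ^ q ^ (s * (i + e)) := ha x
      _ = ∑ i ∈ Finset.range (n - 2 * e + 1),
            c ((s * (i + e)) % n) * x ^ q ^ (s * (i + e)) :=
          Finset.sum_congr rfl fun i hi => by rw [key i hi]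
      _ = ∑ j ∈ Finset.Icc e (n - e), c ((s * j) % n) * x ^ q ^ (s * j) :=
          hreidx fun j => c ((s * j) % n) * x ^ q ^ (s * j)
      _ = (∑ j ∈ Finset.Icc e k, c ((s * j) % n) * x ^ q ^ (s * j))
            + ∑ j ∈ Finset.Ioc k (n - e), c ((s * j) % n) * x ^ q ^ (s * j) :=
          hsplit _
      _ = (∑ j ∈ Finset.Icc e k, c ((s * j) % n) * x ^ q ^ (s * j))
            + ∑ j ∈ Finset.Icc e k, c ((s * (n - j)) % n) * x ^ q ^ (s * (n - j)) :=
          congrArg _ (hreflect fun j => c ((s * j) % n) * x ^ q ^ (s * j))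
      _ = ∑ j ∈ Finset.Icc e k,
            (c ((s * j) % n) * x ^ q ^ (s * j) - (c ((s * j) % n) * x) ^ q ^ (s * (n - j))) := by
          rw [← Finset.sum_add_distrib]
          refine Finset.sum_congr rfl fun j hj => ?_
          simp only [Finset.mem_Icc] at hj
          rw [mul_pow, DG_frobm hF x (s * (n - j)),
            DG_frobm hF (c ((s * j) % n)) (s * (n - j)),
            hrpair j (by omega) (by omega),
            hcalt ((s * j) % n) (hr0 j (by omega) (by omega)) (hrlt j)]
          ring
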